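/- Let D and D' be self-adjoint operators on a Hilbert space H with D' = D + B for a bounded operator B. If both (1 + D^2)^{-1} and D·(1 + D^2)^{-1} are compact, then D'·(1 + D'^2)^{-1} is compact. -/
import Mathlib


variable {H : Type*} [NormedAddCommGroup H] [InnerProductSpace ℂ H] [CompleteSpace H]

/-- `R` is the bounded operator `(1 + D^2)⁻¹`. -/
def IsResolventOfOnePlusSq (D : H →ₗ.[ℂ] H) (R : H →L[ℂ] H) : Prop :=
  ∀ y : H, ∃ (h1 : R y ∈ D.domain) (h2 : D ⟨R y, h1⟩ ∈ D.domain),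
    R y + D ⟨D ⟨R y, h1⟩, h2⟩ = y

/-- `S` is the bounded operator `D · (1 + D^2)⁻¹`, where `R = (1 + D^2)⁻¹`. -/
def IsDTimesResolvent (D : H →ₗ.[ℂ] H) (R S : H →L[ℂ] H) : Prop :=
  ∀ y : H, ∃ h1 : R y ∈ D.domain, S y = D ⟨R y, h1⟩

local notation "⟪" x ", " y "⟫" => @inner ℂ _ _ x y

/-- Symmetry of the resolvent `R = (1+D²)⁻¹`. -/
lemma aux_Rsym {D : H →ₗ.[ℂ] H} (hsym : D.IsFormalAdjoint D) {R : H →L[ℂ] H}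
    (hR : IsResolventOfOnePlusSq D R) (y z : H) : ⟪R y, z⟫ = ⟪y, R z⟫ := by
  obtain ⟨h1, h2, hy⟩ := hR y
  obtain ⟨k1, k2, hz⟩ := hR z
  calc ⟪R y, z⟫ = ⟪R y, R z + D ⟨D ⟨R z, k1⟩, k2⟩⟫ := by rw [hz]
    _ = ⟪R y, R z⟫ + ⟪R y, D ⟨D ⟨R z, k1⟩, k2⟩⟫ := inner_add_right _ _ _
    _ = ⟪R y, R z⟫ + ⟪D ⟨R y, h1⟩, D ⟨R z, k1⟩⟫ := by
        rw [hsym ⟨R y, h1⟩ ⟨D ⟨R z, k1⟩, k2⟩]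
    _ = ⟪R y, R z⟫ + ⟪D ⟨D ⟨R y, h1⟩, h2⟩, R z⟫ := by
        rw [hsym ⟨D ⟨R y, h1⟩, h2⟩ ⟨R z, k1⟩]
    _ = ⟪R y + D ⟨D ⟨R y, h1⟩, h2⟩, R z⟫ := (inner_add_left _ _ _).symm
    _ = ⟪y, R z⟫ := by rw [hy]

/-- Symmetry of `S = D·(1+D²)⁻¹`. -/
lemma aux_Ssym {D : H →ₗ.[ℂ] H} (hsym : D.IsFormalAdjoint D) {R S : H →L[ℂ] H}
    (hR : IsResolventOfOnePlusSq D R) (hS : IsDTimesResolvent D R S) (y z : H) :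
    ⟪S y, z⟫ = ⟪y, S z⟫ := by
  obtain ⟨h1, h2, hy⟩ := hR y
  obtain ⟨k1, k2, hz⟩ := hR z
  obtain ⟨h1', hSy⟩ := hS y
  obtain ⟨k1', hSz⟩ := hS z
  have hSy : S y = D ⟨R y, h1⟩ := hSy
  have hSz : S z = D ⟨R z, k1⟩ := hSz
  calc ⟪S y, z⟫ = ⟪D ⟨R y, h1⟩, R z + D ⟨D ⟨R z, k1⟩, k2⟩⟫ := by rw [hSy, hz]
    _ = ⟪D ⟨R y, h1⟩, R z⟫ + ⟪D ⟨R y, h1⟩, D ⟨D ⟨R z, k1⟩, k2⟩⟫ := inner_add_right _ _ _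
    _ = ⟪R y, D ⟨R z, k1⟩⟫ + ⟪D ⟨D ⟨R y, h1⟩, h2⟩, D ⟨R z, k1⟩⟫ := by
        rw [hsym ⟨R y, h1⟩ ⟨R z, k1⟩, hsym ⟨D ⟨R y, h1⟩, h2⟩ ⟨D ⟨R z, k1⟩, k2⟩]
    _ = ⟪R y + D ⟨D ⟨R y, h1⟩, h2⟩, D ⟨R z, k1⟩⟫ := (inner_add_left _ _ _).symm
    _ = ⟪y, S z⟫ := by rw [hy, hSz]

/-- If `D, D'` are self-adjoint with `D' = D + B` for bounded `B`, and both `(1 + D^2)⁻¹` and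
`D·(1 + D^2)⁻¹` are compact, then `D'·(1 + D'^2)⁻¹` is compact. -/
theorem stmt1 (D D' : H →ₗ.[ℂ] H)
    (hD : IsSelfAdjoint D) (hD' : IsSelfAdjoint D')
    (hdense : Dense (D.domain : Set H)) (hdomeq : D'.domain = D.domain)
    (B : H →L[ℂ] H)
    (hB : ∀ x : D.domain, D' ⟨(x : H), hdomeq.symm ▸ x.2⟩ = D x + B x)
    (R R' S S' : H →L[ℂ] H)
    (hR : IsResolventOfOnePlusSq D R) (hR' : IsResolventOfOnePlusSq D' R')
    (hS : IsDTimesResolvent D R S) (hS' : IsDTimesResolvent D' R' S')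
    (hRcompact : IsCompactOperator (⇑R)) (hScompact : IsCompactOperator (⇑S)) :
    IsCompactOperator (⇑S') := by
  rw [LinearPMap.isSelfAdjoint_def] at hD hD'
  have hdense' : Dense (D'.domain : Set H) := hdomeq ▸ hdense
  have hsym : D.IsFormalAdjoint D := by
    have h0 := LinearPMap.adjoint_isFormalAdjoint hdense; rwa [hD] at h0
  have hsym' : D'.IsFormalAdjoint D' := by
    have h0 := LinearPMap.adjoint_isFormalAdjoint hdense'; rwa [hD'] at h0
  -- membership transfer
  have hmem : ∀ {x : H}, x ∈ D'.domain → x ∈ D.domain := fun hx => hdomeq ▸ hx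
  have hmem' : ∀ {x : H}, x ∈ D.domain → x ∈ D'.domain := fun hx => hdomeq.symm ▸ hx
  -- the key pointwise identity : S' z = R (B (R' z)) + S z - S (B (S' z))
  have key : ∀ z : H, S' z = R (B (R' z)) + S z - S (B (S' z)) := by
    intro z
    obtain ⟨hw, hw2, hzeq⟩ := hR' z
    obtain ⟨hw', hSeq⟩ := hS' z
    have hSeq : S' z = D' ⟨R' z, hw⟩ := hSeq
    have hSz_mem' : S' z ∈ D'.domain := hSeq ▸ hw2
    have hSz_mem : S' z ∈ D.domain := hmem hSz_mem'
    have hw_memD : R' z ∈ D.domain := hmem hw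
    -- (1) : S' z = D ⟨R' z, _⟩ + B (R' z)
    have eq1 : S' z = D ⟨R' z, hw_memD⟩ + B (R' z) := by
      rw [hSeq]; exact hB ⟨R' z, hw_memD⟩
    -- (2) : D ⟨S' z, _⟩ = z - R' z - B (S' z)
    have eq2 : D ⟨S' z, hSz_mem⟩ = z - R' z - B (S' z) := by
      have h : R' z + D' ⟨S' z, hSz_mem'⟩ = z := by
        have : D' ⟨D' ⟨R' z, hw⟩, hw2⟩ = D' ⟨S' z, hSz_mem'⟩ := by
          congr 1; exact Subtype.ext hSeq.symm
        rw [← this]; exact hzeq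
      have h2 : D' ⟨S' z, hSz_mem'⟩ = D ⟨S' z, hSz_mem⟩ + B (S' z) := hB ⟨S' z, hSz_mem⟩
      rw [h2] at h
      calc D ⟨S' z, hSz_mem⟩
          = (R' z + (D ⟨S' z, hSz_mem⟩ + B (S' z))) - R' z - B (S' z) := by abel
        _ = z - R' z - B (S' z) := by rw [h]
    refine ext_inner_right ℂ fun t => ?_
    obtain ⟨k1, k2, hteq⟩ := hR t
    obtain ⟨k1', hSteq⟩ := hS t
    have hSteq : S t = D ⟨R t, k1⟩ := hSteq
    calc ⟪S' z, t⟫ = ⟪S' z, R t + D ⟨D ⟨R t, k1⟩, k2⟩⟫ := by rw [hteq]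
      _ = ⟪S' z, R t⟫ + ⟪S' z, D ⟨D ⟨R t, k1⟩, k2⟩⟫ := inner_add_right _ _ _
      _ = ⟪S' z, R t⟫ + ⟪D ⟨S' z, hSz_mem⟩, D ⟨R t, k1⟩⟫ := by
          rw [hsym ⟨S' z, hSz_mem⟩ ⟨D ⟨R t, k1⟩, k2⟩]
      _ = ⟪D ⟨R' z, hw_memD⟩ + B (R' z), R t⟫ + ⟪z - R' z - B (S' z), S t⟫ := by
          rw [← eq1, eq2, hSteq]
      _ = ⟪D ⟨R' z, hw_memD⟩, R t⟫ + ⟪B (R' z), R t⟫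
            + (⟪z, S t⟫ - ⟪R' z, S t⟫ - ⟪B (S' z), S t⟫) := by
          rw [inner_add_left, inner_sub_left, inner_sub_left]
      _ = ⟪R' z, S t⟫ + ⟪B (R' z), R t⟫
            + (⟪z, S t⟫ - ⟪R' z, S t⟫ - ⟪B (S' z), S t⟫) := by
          rw [hsym ⟨R' z, hw_memD⟩ ⟨R t, k1⟩, hSteq]
      _ = ⟪B (R' z), R t⟫ + ⟪z, S t⟫ - ⟪B (S' z), S t⟫ := by ring
      _ = ⟪R (B (R' z)), t⟫ + ⟪S z, t⟫ - ⟪S (B (S' z)), t⟫ := by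
          rw [aux_Rsym hsym hR, aux_Ssym hsym hR hS, aux_Ssym hsym hR hS]
      _ = ⟪R (B (R' z)) + S z - S (B (S' z)), t⟫ := by
          rw [inner_sub_left, inner_add_left]
  have hfun : ⇑S' = (⇑R ∘ ⇑(B.comp R')) + (⇑S ∘ ⇑(1 - B.comp S')) := by
    funext z
    simp only [Pi.add_apply, Function.comp_apply, ContinuousLinearMap.comp_apply,
      ContinuousLinearMap.sub_apply, ContinuousLinearMap.one_apply, map_sub]
    conv_lhs => rw [key z]
    abel
  rw [hfun]
  exact (hRcompact.comp_clm (B.comp R')).add (hScompact.comp_clm (1 - B.comp S'))
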